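/- Let G be a connected half-transitive multigraph with bipartition V₁ ∪ V₂, with part-degrees d₁ and d₂, and suppose G is not super edge-connected. If A and B are two distinct λ-superatoms with |A| = |B| ≥ 3, then A ∩ B = ∅. -/

import Mathlib

/-- A multigraph: multiple edges allowed (recorded as edge multiplicities), no loops. -/
structure Multigraph (V : Type*) where
  mult : V → V → ℕ
  symm : ∀ u v, mult u v = mult v u
  loopless : ∀ v, mult v v = 0

namespace Multigraph

variable {V : Type*}

/-- Adjacency: at least one edge between `u` and `v`. -/
def Adj (G : Multigraph V) (u v : V) : Prop := 0 < G.mult u v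

instance (G : Multigraph V) (v : V) : DecidablePred (G.Adj v) :=
  fun u => inferInstanceAs (Decidable (0 < G.mult v u))

/-- Reachability by walks. -/
def Reachable (G : Multigraph V) : V → V → Prop := Relation.ReflTransGen G.Adj

/-- A multigraph is connected if it is nonempty and every two vertices are joined by a walk. -/
def Connected (G : Multigraph V) : Prop := Nonempty V ∧ ∀ u v, G.Reachable u v

/-- An automorphism of a multigraph: a permutation preserving all edge multiplicities. -/
def Aut (G : Multigraph V) : Type _ :=
  {e : Equiv.Perm V // ∀ u v, G.mult (e u) (e v) = G.mult u v}

/-- A set of edges of `G`, given by sub-multiplicities. -/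
structure EdgeSub (G : Multigraph V) where
  f : V → V → ℕ
  symm : ∀ u v, f u v = f v u
  le : ∀ u v, f u v ≤ G.mult u v

/-- The multigraph obtained by deleting the edge set `F`. -/
def deleteEdges (G : Multigraph V) (F : G.EdgeSub) : Multigraph V where
  mult u v := G.mult u v - F.f u v
  symm u v := by (try dsimp only); rw [G.symm u v, F.symm u v]
  loopless v := by simp [G.loopless v]

/-- `F` is an edge-cut if removing it disconnects `G`. -/
def IsEdgeCut (G : Multigraph V) (F : G.EdgeSub) : Prop := ¬ (G.deleteEdges F).Connected

/-- `F` is a restricted edge-cut if removing it disconnects `G` and leaves no isolated vertex. -/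
def IsRestrictedEdgeCut (G : Multigraph V) (F : G.EdgeSub) : Prop :=
  G.IsEdgeCut F ∧ ∀ v, ∃ u, (G.deleteEdges F).Adj v u

/-- `G` is bipartite with parts `V₁`, `V₂`. -/
def IsBipartition [DecidableEq V] [Fintype V] (G : Multigraph V) (V₁ V₂ : Finset V) : Prop :=
  Disjoint V₁ V₂ ∧ V₁ ∪ V₂ = Finset.univ ∧ ∀ u v, G.Adj u v → (u ∈ V₁ ↔ v ∈ V₂)

/-- A bipartite multigraph is half-transitive if `Aut G` is transitive on each part. -/
def IsHalfTransitive [DecidableEq V] [Fintype V] (G : Multigraph V) (V₁ V₂ : Finset V) : Prop :=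
  G.IsBipartition V₁ V₂ ∧
  (∀ u ∈ V₁, ∀ v ∈ V₁, ∃ e : G.Aut, e.1 u = v) ∧
  (∀ u ∈ V₂, ∀ v ∈ V₂, ∃ e : G.Aut, e.1 u = v)

/-- An imprimitive block for `Aut G`. -/
def IsImprimitiveBlock [DecidableEq V] (G : Multigraph V) (A : Finset V) [Fintype V] : Prop :=
  A.Nonempty ∧ A ≠ Finset.univ ∧
  ∀ e : G.Aut, A.image e.1 = A ∨ Disjoint (A.image e.1) A

/-- The induced sub-multigraph on a vertex set `S`. -/
def induce (G : Multigraph V) (S : Finset V) : Multigraph {x // x ∈ S} where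
  mult a b := G.mult a.1 b.1
  symm a b := G.symm a.1 b.1
  loopless a := G.loopless a.1

section Fin

variable [Fintype V] [DecidableEq V]

/-- The degree of a vertex (counting multiplicities). -/
def degree (G : Multigraph V) (v : V) : ℕ := ∑ u, G.mult v u

/-- The minimum degree `δ(G)`. -/
noncomputable def minDegree (G : Multigraph V) : ℕ := sInf {n | ∃ v, G.degree v = n}

/-- The maximum edge multiplicity `μ(G)`. -/
def maxMult (G : Multigraph V) : ℕ := Finset.univ.sup fun p : V × V => G.mult p.1 p.2

/-- `d(A)`: the number of edges between `A` and its complement. -/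
def cut (G : Multigraph V) (A : Finset V) : ℕ := ∑ u ∈ A, ∑ v ∈ Aᶜ, G.mult u v

/-- The number of edges in an edge set. -/
def EdgeSub.card {G : Multigraph V} (F : G.EdgeSub) : ℕ := (∑ u, ∑ v, F.f u v) / 2

/-- The edge-boundary `N(A)` of a vertex set `A`, as an edge set. -/
def boundary (G : Multigraph V) (A : Finset V) : G.EdgeSub where
  f u v := if (u ∈ A ∧ v ∉ A) ∨ (v ∈ A ∧ u ∉ A) then G.mult u v else 0
  symm u v := by
    try dsimp only
    by_cases h1 : u ∈ A <;> by_cases h2 : v ∈ A <;> simp [h1, h2, G.symm u v]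
  le u v := by (try dsimp only); split_ifs <;> simp

/-- The edge-connectivity `λ(G)`. -/
noncomputable def edgeConn (G : Multigraph V) : ℕ :=
  sInf {n | ∃ F : G.EdgeSub, G.IsEdgeCut F ∧ F.card = n}

/-- The restricted edge-connectivity `λ'(G)`. -/
noncomputable def rEdgeConn (G : Multigraph V) : ℕ :=
  sInf {n | ∃ F : G.EdgeSub, G.IsRestrictedEdgeCut F ∧ F.card = n}

/-- The minimum edge degree `ξ(G) = min {d(u)+d(v)-2μ(uv) : uv ∈ E}`. -/
noncomputable def minEdgeDegree (G : Multigraph V) : ℕ :=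
  sInf {n | ∃ u v, G.Adj u v ∧ n = G.degree u + G.degree v - 2 * G.mult u v}

/-- A `λ`-fragment: a vertex set whose edge-boundary is a minimum edge-cut. -/
def IsFragment (G : Multigraph V) (A : Finset V) : Prop :=
  A.Nonempty ∧ Aᶜ.Nonempty ∧ G.IsEdgeCut (G.boundary A) ∧ G.cut A = G.edgeConn

/-- A `λ`-atom: a `λ`-fragment of minimum cardinality. -/
def IsAtom (G : Multigraph V) (A : Finset V) : Prop :=
  G.IsFragment A ∧ ∀ B : Finset V, G.IsFragment B → A.card ≤ B.card

/-- A strict `λ`-fragment: a `λ`-fragment `C` with `2 ≤ |C| ≤ |V| - 2`. -/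
def IsStrictFragment (G : Multigraph V) (A : Finset V) : Prop :=
  G.IsFragment A ∧ 2 ≤ A.card ∧ A.card ≤ Fintype.card V - 2

/-- A `λ`-superatom: a strict `λ`-fragment of minimum cardinality. -/
def IsSuperAtom (G : Multigraph V) (A : Finset V) : Prop :=
  G.IsStrictFragment A ∧ ∀ B : Finset V, G.IsStrictFragment B → A.card ≤ B.card

/-- A `λ'`-fragment: a vertex set whose edge-boundary is a minimum restricted edge-cut. -/
def IsRFragment (G : Multigraph V) (A : Finset V) : Prop :=
  G.IsRestrictedEdgeCut (G.boundary A) ∧ G.cut A = G.rEdgeConn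

/-- A `λ'`-atom: a `λ'`-fragment of minimum cardinality. -/
def IsRAtom (G : Multigraph V) (A : Finset V) : Prop :=
  G.IsRFragment A ∧ ∀ B : Finset V, G.IsRFragment B → A.card ≤ B.card

/-- `G` is super edge-connected if every minimum edge-cut is the set of all edges
incident with some vertex. -/
def IsSuperEdgeConnected (G : Multigraph V) : Prop :=
  ∀ F : G.EdgeSub, G.IsEdgeCut F → F.card = G.edgeConn →
    ∃ v : V, ∀ u w : V, F.f u w = if u = v ∨ w = v then G.mult u w else 0

end Fin

end Multigraph

variable {V : Type*} [Fintype V] [DecidableEq V]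

open Multigraph



section Aux
variable {V : Type*} [Fintype V] [DecidableEq V] (G : Multigraph V)

lemma sum_ite_mem_univ (S : Finset V) (f : V → ℕ) :
    ∑ u, (if u ∈ S then f u else 0) = ∑ u ∈ S, f u := by
  rw [Finset.sum_ite_mem, Finset.univ_inter]

lemma cut_eq_sum (S : Finset V) :
    G.cut S = ∑ u, ∑ v, (if u ∈ S ∧ v ∉ S then G.mult u v else 0) := by
  unfold Multigraph.cut
  rw [← sum_ite_mem_univ S]
  apply Finset.sum_congr rfl
  intro u _
  by_cases hu : u ∈ S
  · simp only [hu, true_and, if_true]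
    rw [← sum_ite_mem_univ Sᶜ]
    apply Finset.sum_congr rfl
    intro v _
    simp [Finset.mem_compl]
  · simp [hu]

lemma cut_compl (S : Finset V) : G.cut Sᶜ = G.cut S := by
  rw [cut_eq_sum, cut_eq_sum, Finset.sum_comm]
  apply Finset.sum_congr rfl; intro u _
  apply Finset.sum_congr rfl; intro v _
  simp only [Finset.mem_compl, not_not, G.symm u v]
  congr 1
  · simp only [eq_iff_iff]; tauto
lemma two_cut_eq (S : Finset V) :
    2 * G.cut S = ∑ u, ∑ v, (G.boundary S).f u v := by
  have : ∀ u v, (G.boundary S).f u v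
      = (if u ∈ S ∧ v ∉ S then G.mult u v else 0)
      + (if u ∈ Sᶜ ∧ v ∉ Sᶜ then G.mult u v else 0) := by
    intro u v
    show (if (u ∈ S ∧ v ∉ S) ∨ (v ∈ S ∧ u ∉ S) then G.mult u v else 0) = _
    by_cases hu : u ∈ S <;> by_cases hv : v ∈ S <;> simp [hu, hv]
  simp only [this, Finset.sum_add_distrib]
  rw [← cut_eq_sum, ← cut_eq_sum, cut_compl]
  ring

lemma boundary_card (S : Finset V) : (G.boundary S).card = G.cut S := by
  unfold Multigraph.EdgeSub.card
  rw [← two_cut_eq]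
  omega

lemma boundary_isEdgeCut {S : Finset V} (h1 : S.Nonempty) (h2 : Sᶜ.Nonempty) :
    G.IsEdgeCut (G.boundary S) := by
  intro hc
  obtain ⟨x, hx⟩ := h1
  obtain ⟨y, hy⟩ := h2
  have key : ∀ a b, (G.deleteEdges (G.boundary S)).Reachable a b → a ∈ S → b ∈ S := by
    intro a b hr
    induction hr with
    | refl => exact id
    | tail _ hadj ih =>
      rename_i b c _
      intro ha
      have hb := ih ha
      by_contra hc'
      have : (G.deleteEdges (G.boundary S)).mult b c = 0 := by
        show G.mult b c - (G.boundary S).f b c = 0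
        show G.mult b c - (if (b ∈ S ∧ c ∉ S) ∨ (c ∈ S ∧ b ∉ S) then G.mult b c else 0) = 0
        rw [if_pos (Or.inl ⟨hb, hc'⟩)]
        omega
      exact absurd hadj (by simp [Multigraph.Adj, this])
  exact (Finset.mem_compl.mp hy) (key x y (hc.2 x y) hx)

lemma edgeConn_le_cut {S : Finset V} (h1 : S.Nonempty) (h2 : Sᶜ.Nonempty) :
    G.edgeConn ≤ G.cut S :=
  Nat.sInf_le ⟨G.boundary S, boundary_isEdgeCut G h1 h2, boundary_card G S⟩
lemma two_cut_submod (A B : Finset V) :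
    2 * G.cut (A ∩ B) + 2 * G.cut (A ∪ B) ≤ 2 * G.cut A + 2 * G.cut B := by
  simp only [two_cut_eq, ← Finset.sum_add_distrib]
  apply Finset.sum_le_sum; intro u _
  apply Finset.sum_le_sum; intro v _
  show (if _ then G.mult u v else 0) + (if _ then G.mult u v else 0)
      ≤ (if _ then G.mult u v else 0) + (if _ then G.mult u v else 0)
  by_cases h1 : u ∈ A <;> by_cases h2 : u ∈ B <;> by_cases h3 : v ∈ A <;>
    by_cases h4 : v ∈ B <;> simp [h1, h2, h3, h4]

lemma two_cut_posimod (A B : Finset V) :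
    2 * G.cut (A \ B) + 2 * G.cut (B \ A) ≤ 2 * G.cut A + 2 * G.cut B := by
  simp only [two_cut_eq, ← Finset.sum_add_distrib]
  apply Finset.sum_le_sum; intro u _
  apply Finset.sum_le_sum; intro v _
  show (if _ then G.mult u v else 0) + (if _ then G.mult u v else 0)
      ≤ (if _ then G.mult u v else 0) + (if _ then G.mult u v else 0)
  by_cases h1 : u ∈ A <;> by_cases h2 : u ∈ B <;> by_cases h3 : v ∈ A <;>
    by_cases h4 : v ∈ B <;> simp [h1, h2, h3, h4]
lemma isStrictFragment_of {S : Finset V} (h1 : S.Nonempty) (h2 : Sᶜ.Nonempty)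
    (hcut : G.cut S = G.edgeConn) (hlo : 2 ≤ S.card) (hhi : S.card ≤ Fintype.card V - 2) :
    G.IsStrictFragment S :=
  ⟨⟨h1, h2, boundary_isEdgeCut G h1 h2, hcut⟩, hlo, hhi⟩

end Aux

theorem superAtoms_disjoint' (G : Multigraph V)
    (A B : Finset V)
    (hA : G.IsSuperAtom A) (hB : G.IsSuperAtom B) (hAB : A ≠ B)
    (hcard : A.card = B.card) (h3 : 3 ≤ A.card) :
    Disjoint A B := by
  by_contra hnd
  obtain ⟨⟨hAfrag, hAlo, hAhi⟩, hAmin⟩ := hA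
  obtain ⟨⟨hBfrag, hBlo, hBhi⟩, _⟩ := hB
  obtain ⟨hAne, hAcne, _, hAcut⟩ := hAfrag
  obtain ⟨hBne, hBcne, _, hBcut⟩ := hBfrag
  set n := Fintype.card V with hn
  set a := A.card with ha
  have hBcard : B.card = a := hcard.symm
  have hna : a ≤ n := Finset.card_le_univ A
  have hInter : (A ∩ B).Nonempty := Finset.not_disjoint_iff_nonempty_inter.mp hnd
  set c := (A ∩ B).card with hc
  have hc1 : 1 ≤ c := Finset.card_pos.mpr hInter
  have hclt : c < a := by
    have hsub : A ∩ B ⊆ A := Finset.inter_subset_left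
    refine Finset.card_lt_card (Finset.ssubset_iff_subset_ne.mpr ⟨hsub, fun h => ?_⟩)
    have : A ⊆ B := by rw [← h]; exact Finset.inter_subset_right
    exact hAB (Finset.eq_of_subset_of_card_le this (by omega))
  -- Bᶜ is a strict fragment, hence 2a ≤ n
  have hBcc : B.card = n - Bᶜ.card := by
    have := Finset.card_compl B (α := V); omega
  have h2an : 2 * a ≤ n := by
    have hBcompl : G.IsStrictFragment Bᶜ := by
      refine isStrictFragment_of G ?_ (by simpa using hBne) ?_ ?_ ?_
      · rw [← Finset.card_pos, Finset.card_compl]; omega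
      · rw [cut_compl]; exact hBcut
      · rw [Finset.card_compl]; omega
      · rw [Finset.card_compl]; omega
    have := hAmin Bᶜ hBcompl
    rw [Finset.card_compl] at this
    omega
  have hUcard : (A ∪ B).card + c = a + a := by
    have := Finset.card_union_add_card_inter A B; omega
  have hconn : G.edgeConn = G.cut A := hAcut.symm
  by_cases hc2 : 2 ≤ c
  · -- use submodularity: A ∩ B is a smaller strict fragment
    have hUne : (A ∪ B).Nonempty := hAne.mono Finset.subset_union_left
    have hUcne : (A ∪ B)ᶜ.Nonempty := by
      rw [← Finset.card_pos, Finset.card_compl]; omega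
    have hIcne : (A ∩ B)ᶜ.Nonempty := by
      rw [← Finset.card_pos, Finset.card_compl]; omega
    have l1 := edgeConn_le_cut G hInter hIcne
    have l2 := edgeConn_le_cut G hUne hUcne
    have l3 := two_cut_submod G A B
    rw [hAcut, hBcut] at l3
    have hIcut : G.cut (A ∩ B) = G.edgeConn := by omega
    have := hAmin (A ∩ B) (isStrictFragment_of G hInter hIcne hIcut hc2 (by omega))
    omega
  · -- c = 1; use posimodularity: A \ B is a smaller strict fragment
    have hADcard : (A \ B).card + c = a := by
      have := Finset.card_inter_add_card_sdiff A B; omega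
    have hBDcard : (B \ A).card + c = a := by
      have := Finset.card_inter_add_card_sdiff B A
      rw [Finset.inter_comm] at this; omega
    have hADne : (A \ B).Nonempty := Finset.card_pos.mp (by omega)
    have hBDne : (B \ A).Nonempty := Finset.card_pos.mp (by omega)
    have hADcne : (A \ B)ᶜ.Nonempty := by
      rw [← Finset.card_pos, Finset.card_compl]; omega
    have hBDcne : (B \ A)ᶜ.Nonempty := by
      rw [← Finset.card_pos, Finset.card_compl]; omega
    have l1 := edgeConn_le_cut G hADne hADcne
    have l2 := edgeConn_le_cut G hBDne hBDcne
    have l3 := two_cut_posimod G A B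
    rw [hAcut, hBcut] at l3
    have hADcut : G.cut (A \ B) = G.edgeConn := by omega
    have := hAmin (A \ B)
      (isStrictFragment_of G hADne hADcne hADcut (by omega) (by omega))
    omega

/-- In a connected half-transitive multigraph which is not super edge-connected, two distinct
`λ`-superatoms `A`, `B` with `|A| = |B| ≥ 3` are disjoint. -/
theorem superAtoms_disjoint (G : Multigraph V) (V₁ V₂ : Finset V) (d₁ d₂ : ℕ)
    (hG : G.Connected) (hht : G.IsHalfTransitive V₁ V₂)
    (hd1 : ∀ v ∈ V₁, G.degree v = d₁) (hd2 : ∀ v ∈ V₂, G.degree v = d₂)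
    (hns : ¬ G.IsSuperEdgeConnected) (A B : Finset V)
    (hA : G.IsSuperAtom A) (hB : G.IsSuperAtom B) (hAB : A ≠ B)
    (hcard : A.card = B.card) (h3 : 3 ≤ A.card) :
    Disjoint A B := by
  exact superAtoms_disjoint' G A B hA hB hAB hcard h3
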